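/- Let F and G be cyclically symmetric homogeneous polynomials on ℝ^N × ℝ^N of degrees r' and r'' respectively, with seeds f of class D(C_f, σ') and g of class D(C_g, σ''), and assume σ' ≠ σ''. Then the Poisson bracket H = {F, G} admits a seed h of class D(C_h, σ) with σ = min(σ', σ'') and C_h = r' r'' C_f C_g / ((1 − e^{−max(σ',σ'')}) (1 − e^{−|σ'−σ''|})). -/

import Mathlib

open MvPolynomial Finset Real

/-- index set for the `2N` variables: `inl j` ↦ `x_j`, `inr j` ↦ `y_j` (indices mod `N`). -/
abbrev Idx (N : ℕ) := Fin N ⊕ Fin N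

open Fin.CommRing in
/-- the cyclic shift `τ^s` (`s ∈ ℤ`) acting on polynomials: `τ^s X_j = X_{j+s}`
(indices mod `N`), separately on the `x` and `y` variables, so that
`(τ^s f)(x,y) = f(τ^s x, τ^s y)`. -/
noncomputable def tauPow (N : ℕ) [NeZero N] (s : ℤ) (f : MvPolynomial (Idx N) ℝ) :
    MvPolynomial (Idx N) ℝ :=
  rename (Sum.map (· + (s : Fin N)) (· + (s : Fin N))) f

/-- `f ↦ f^⊕ := ∑_{l=1}^N τ^l f`. -/
noncomputable def oplus (N : ℕ) [NeZero N] (f : MvPolynomial (Idx N) ℝ) :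
    MvPolynomial (Idx N) ℝ :=
  ∑ l ∈ Finset.range N, tauPow N ((l : ℤ) + 1) f

/-- the polynomial norm `‖f‖_R`; for a homogeneous polynomial of degree `s` it equals
`R^s ∑_{|j|+|k|=s} |f_{j,k}|`. -/
noncomputable def pnorm {N : ℕ} (R : ℝ) (f : MvPolynomial (Idx N) ℝ) : ℝ :=
  ∑ d ∈ f.support, |f.coeff d| * R ^ (d.sum fun _ e => e)

/-- the Poisson bracket `{f,g} = ∑_j (∂f/∂x_j ∂g/∂y_j − ∂f/∂y_j ∂g/∂x_j)`. -/
noncomputable def poisson (N : ℕ) (f g : MvPolynomial (Idx N) ℝ) : MvPolynomial (Idx N) ℝ :=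
  ∑ j : Fin N,
    (pderiv (Sum.inl j) f * pderiv (Sum.inr j) g - pderiv (Sum.inr j) f * pderiv (Sum.inl j) g)

/-- `p` involves only the sites `0,…,m` (it is left aligned with interaction distance `≤ m`). -/
def SuppIn (N : ℕ) (m : ℕ) (p : MvPolynomial (Idx N) ℝ) : Prop :=
  ∀ d ∈ p.support, ∀ j : Fin N, (d (Sum.inl j) ≠ 0 ∨ d (Sum.inr j) ≠ 0) → (j : ℕ) ≤ m

/-- the seed `f` is of class `D(C,σ)`: it decomposes as `f = ∑_{m≥0} f^(m)` with each `f^(m)`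
left aligned, containing only monomials of interaction distance `≤ m`, and
`‖f^(m)‖₁ ≤ C e^{−σ m}`. -/
def ClassD (N : ℕ) (Cf σ : ℝ) (f : MvPolynomial (Idx N) ℝ) : Prop :=
  ∃ (M : ℕ) (comp : ℕ → MvPolynomial (Idx N) ℝ),
    f = ∑ m ∈ Finset.range M, comp m ∧
    (∀ m, M ≤ m → comp m = 0) ∧
    (∀ m, SuppIn N m (comp m)) ∧
    (∀ m, pnorm 1 (comp m) ≤ Cf * Real.exp (-σ * m))

open Fin.CommRing

set_option linter.unusedVariables false


set_option linter.unusedSectionVars false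
section Basic
variable {N : ℕ} [NeZero N]

def tmap (v : Fin N) : Idx N → Idx N := Sum.map (· + v) (· + v)

lemma tmap_inj (v : Fin N) : Function.Injective (tmap v) :=
  Function.Injective.sumMap (fun a b h => by simpa using h) (fun a b h => by simpa using h)

lemma tmap_comp (a b : Fin N) : tmap a ∘ tmap b = tmap (b + a) := by
  funext x; cases x <;> simp [tmap, add_assoc]

lemma tauPow_eq (s : ℤ) (p : MvPolynomial (Idx N) ℝ) :
    tauPow N s p = rename (tmap (s : Fin N)) p := rfl

lemma tauPow_congr {a b : ℤ} (h : (a : Fin N) = (b : Fin N)) (p : MvPolynomial (Idx N) ℝ) :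
    tauPow N a p = tauPow N b p := by rw [tauPow_eq, tauPow_eq, h]

lemma tauPow_tauPow (a b : ℤ) (p : MvPolynomial (Idx N) ℝ) :
    tauPow N a (tauPow N b p) = tauPow N (a + b) p := by
  rw [tauPow_eq, tauPow_eq, rename_rename, tauPow_eq]
  rw [tmap_comp]
  congr 1
  push_cast
  ring

end Basic

section Oplus
variable {N : ℕ} [NeZero N]


lemma oplus_def (p : MvPolynomial (Idx N) ℝ) :
    oplus N p = ∑ l ∈ Finset.range N, tauPow N ((l : ℤ) + 1) p := rfl

lemma oplus_eq (p : MvPolynomial (Idx N) ℝ) :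
    oplus N p = ∑ v : Fin N, rename (tmap (v + 1)) p := by
  rw [oplus, ← Fin.sum_univ_eq_sum_range (fun l => tauPow N ((l : ℤ) + 1) p)]
  refine Finset.sum_congr rfl fun v _ => ?_
  rw [tauPow_eq]
  congr 2
  push_cast
  simp

lemma tauPow_rename_tmap (s : ℤ) (w : Fin N) (p : MvPolynomial (Idx N) ℝ) :
    tauPow N s (rename (tmap w) p) = rename (tmap (w + (s : Fin N))) p := by
  rw [tauPow_eq, rename_rename, tmap_comp]

lemma tauPow_sum {α : Type*} (s : ℤ) (t : Finset α) (F : α → MvPolynomial (Idx N) ℝ) :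
    tauPow N s (∑ i ∈ t, F i) = ∑ i ∈ t, tauPow N s (F i) := by
  rw [tauPow_eq, map_sum]; rfl

lemma oplus_tauPow (s : ℤ) (p : MvPolynomial (Idx N) ℝ) :
    oplus N (tauPow N s p) = oplus N p := by
  rw [oplus_eq, oplus_eq]
  have : ∀ v : Fin N, rename (tmap (v + 1)) (tauPow N s p)
      = rename (tmap (((s : Fin N) + v) + 1)) p := by
    intro v
    rw [tauPow_eq, rename_rename, tmap_comp]
    congr 2
    ring
  simp only [this]
  exact Fintype.sum_equiv (Equiv.addLeft (s : Fin N)) _ _ (fun v => rfl)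

lemma tauPow_oplus (s : ℤ) (p : MvPolynomial (Idx N) ℝ) :
    tauPow N s (oplus N p) = oplus N p := by
  rw [oplus_eq, tauPow_sum]
  have : ∀ v : Fin N, tauPow N s (rename (tmap (v + 1)) p)
      = rename (tmap (((s : Fin N) + v) + 1)) p := by
    intro v
    rw [tauPow_rename_tmap]
    congr 2
    ring
  simp only [this]
  exact Fintype.sum_equiv (Equiv.addLeft (s : Fin N)) _ _ (fun v => rfl)

lemma oplus_sum {α : Type*} (t : Finset α) (F : α → MvPolynomial (Idx N) ℝ) :
    oplus N (∑ i ∈ t, F i) = ∑ i ∈ t, oplus N (F i) := by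
  simp only [oplus, tauPow_sum]
  exact Finset.sum_comm

end Oplus


section PD
variable {N : ℕ} [NeZero N]

lemma pderiv_tauPow_inl (s : ℤ) (j : Fin N) (q : MvPolynomial (Idx N) ℝ) :
    pderiv (Sum.inl j) (tauPow N s q)
      = tauPow N s (pderiv (Sum.inl (j - (s : Fin N))) q) := by
  rw [tauPow_eq, tauPow_eq]
  have : (Sum.inl j : Idx N) = tmap (s : Fin N) (Sum.inl (j - (s : Fin N))) := by
    simp [tmap]
  rw [this, pderiv_rename (tmap_inj _)]

lemma pderiv_tauPow_inr (s : ℤ) (j : Fin N) (q : MvPolynomial (Idx N) ℝ) :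
    pderiv (Sum.inr j) (tauPow N s q)
      = tauPow N s (pderiv (Sum.inr (j - (s : Fin N))) q) := by
  rw [tauPow_eq, tauPow_eq]
  have : (Sum.inr j : Idx N) = tmap (s : Fin N) (Sum.inr (j - (s : Fin N))) := by
    simp [tmap]
  rw [this, pderiv_rename (tmap_inj _)]

lemma tauPow_mul (s : ℤ) (p q : MvPolynomial (Idx N) ℝ) :
    tauPow N s (p * q) = tauPow N s p * tauPow N s q := by
  rw [tauPow_eq]; exact map_mul _ _ _

lemma tauPow_sub (s : ℤ) (p q : MvPolynomial (Idx N) ℝ) :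
    tauPow N s (p - q) = tauPow N s p - tauPow N s q := by
  rw [tauPow_eq]; exact map_sub _ _ _

lemma poisson_tauPow (s : ℤ) (p q : MvPolynomial (Idx N) ℝ) :
    poisson N (tauPow N s p) (tauPow N s q) = tauPow N s (poisson N p q) := by
  rw [poisson, poisson, tauPow_sum]
  refine (Fintype.sum_equiv (Equiv.addRight ((s : Fin N))) _ _ fun j => ?_).symm
  show tauPow N s _ = _
  rw [pderiv_tauPow_inl, pderiv_tauPow_inl, pderiv_tauPow_inr, pderiv_tauPow_inr,
    ← tauPow_mul, ← tauPow_mul, ← tauPow_sub]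
  simp [Equiv.addRight]

lemma poisson_sum_left {α : Type*} (t : Finset α) (F : α → MvPolynomial (Idx N) ℝ)
    (g : MvPolynomial (Idx N) ℝ) :
    poisson N (∑ i ∈ t, F i) g = ∑ i ∈ t, poisson N (F i) g := by
  unfold poisson
  rw [Finset.sum_comm]
  refine Finset.sum_congr rfl fun j _ => ?_
  rw [map_sum, map_sum, Finset.sum_mul, Finset.sum_mul, ← Finset.sum_sub_distrib]

lemma poisson_sum_right {α : Type*} (t : Finset α) (F : α → MvPolynomial (Idx N) ℝ)
    (g : MvPolynomial (Idx N) ℝ) :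
    poisson N g (∑ i ∈ t, F i) = ∑ i ∈ t, poisson N g (F i) := by
  unfold poisson
  rw [Finset.sum_comm]
  refine Finset.sum_congr rfl fun j _ => ?_
  rw [map_sum, map_sum, Finset.mul_sum, Finset.mul_sum, ← Finset.sum_sub_distrib]

end PD


section Pnorm
variable {N : ℕ} [NeZero N]

lemma pnorm_one_eq (p : MvPolynomial (Idx N) ℝ) :
    pnorm 1 p = ∑ d ∈ p.support, |p.coeff d| := by
  simp [pnorm]

lemma pnorm_eq_of_subset {p : MvPolynomial (Idx N) ℝ} {S : Finset ((Idx N) →₀ ℕ)}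
    (h : p.support ⊆ S) : pnorm 1 p = ∑ d ∈ S, |p.coeff d| := by
  rw [pnorm_one_eq]
  exact Finset.sum_subset h fun d _ hd => by
    simp [MvPolynomial.notMem_support_iff.1 hd]

lemma pnorm_nonneg (p : MvPolynomial (Idx N) ℝ) : 0 ≤ pnorm 1 p := by
  rw [pnorm_one_eq]
  exact Finset.sum_nonneg fun d _ => abs_nonneg _

lemma pnorm_add_le (p q : MvPolynomial (Idx N) ℝ) :
    pnorm 1 (p + q) ≤ pnorm 1 p + pnorm 1 q := by
  classical
  rw [pnorm_eq_of_subset (S := p.support ∪ q.support) MvPolynomial.support_add,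
    pnorm_eq_of_subset (S := p.support ∪ q.support) Finset.subset_union_left,
    pnorm_eq_of_subset (S := p.support ∪ q.support) Finset.subset_union_right,
    ← Finset.sum_add_distrib]
  exact Finset.sum_le_sum fun d _ => by
    rw [MvPolynomial.coeff_add]; exact abs_add_le _ _

lemma pnorm_zero : pnorm 1 (0 : MvPolynomial (Idx N) ℝ) = 0 := by simp [pnorm]

lemma pnorm_sum_le {α : Type*} (t : Finset α) (F : α → MvPolynomial (Idx N) ℝ) :
    pnorm 1 (∑ i ∈ t, F i) ≤ ∑ i ∈ t, pnorm 1 (F i) := by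
  classical
  induction t using Finset.induction_on with
  | empty => simp [pnorm_zero]
  | insert _ _ h ih =>
    rw [Finset.sum_insert h, Finset.sum_insert h]
    exact (pnorm_add_le _ _).trans (by linarith)

lemma pnorm_monomial_le (d : (Idx N) →₀ ℕ) (c : ℝ) :
    pnorm 1 (monomial d c) ≤ |c| := by
  classical
  rcases eq_or_ne c 0 with rfl | hc
  · simp [pnorm_zero]
  · rw [pnorm_eq_of_subset (S := {d}) (by rw [MvPolynomial.support_monomial]; simp [hc])]
    simp [MvPolynomial.coeff_monomial]

lemma pnorm_mul_le (p q : MvPolynomial (Idx N) ℝ) :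
    pnorm 1 (p * q) ≤ pnorm 1 p * pnorm 1 q := by
  classical
  conv_lhs => rw [p.as_sum, q.as_sum, Finset.sum_mul_sum]
  refine (pnorm_sum_le _ _).trans ?_
  rw [pnorm_one_eq, pnorm_one_eq, Finset.sum_mul_sum]
  refine Finset.sum_le_sum fun d _ => ?_
  refine (pnorm_sum_le _ _).trans (Finset.sum_le_sum fun e _ => ?_)
  rw [MvPolynomial.monomial_mul]
  exact (pnorm_monomial_le _ _).trans (by rw [abs_mul])

lemma pnorm_tauPow (s : ℤ) (p : MvPolynomial (Idx N) ℝ) :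
    pnorm 1 (tauPow N s p) = pnorm 1 p := by
  classical
  rw [pnorm_one_eq, pnorm_one_eq, tauPow_eq,
    MvPolynomial.support_rename_of_injective (tmap_inj _), Finset.sum_image
      (fun a _ b _ h => Finsupp.mapDomain_injective (tmap_inj _) h)]
  exact Finset.sum_congr rfl fun d _ => by
    rw [MvPolynomial.coeff_rename_mapDomain _ (tmap_inj _)]

lemma sum_pderiv_le {p : MvPolynomial (Idx N) ℝ} {r : ℕ} (hp : p.IsHomogeneous r) :
    ∑ i : Idx N, pnorm 1 (pderiv i p) ≤ r * pnorm 1 p := by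
  classical
  have h1 : ∀ i : Idx N, pnorm 1 (pderiv i p) ≤ ∑ d ∈ p.support, |p.coeff d| * (d i : ℝ) := by
    intro i
    conv_lhs => rw [p.as_sum]
    rw [map_sum]
    simp only [pderiv_monomial]
    refine (pnorm_sum_le _ _).trans (Finset.sum_le_sum fun d _ => ?_)
    exact (pnorm_monomial_le _ _).trans (by rw [abs_mul, Nat.abs_cast])
  refine (Finset.sum_le_sum fun i _ => h1 i).trans ?_
  rw [Finset.sum_comm, pnorm_one_eq, Finset.mul_sum]
  refine Finset.sum_le_sum fun d hd => ?_
  rw [← Finset.mul_sum]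
  have hdeg : ∑ i : Idx N, (d i : ℝ) = (r : ℝ) := by
    have h2 : ∑ i ∈ d.support, d i = r := by
      have := hp (MvPolynomial.mem_support_iff.1 hd)
      rw [show (Finsupp.weight 1 : (Idx N →₀ ℕ) →+ ℕ) = Finsupp.degree from Finsupp.degree_eq_weight_one.symm] at this
      exact this
    rw [← h2, Finset.sum_subset (Finset.subset_univ d.support)
      (fun i _ hi => by simp [Finsupp.notMem_support_iff.1 hi])]
    push_cast
    rfl
  rw [hdeg, mul_comm]

end Pnorm


section Sites
variable {N : ℕ} [NeZero N]

def SiteIn (N : ℕ) [NeZero N] (P : Fin N → Prop) (p : MvPolynomial (Idx N) ℝ) : Prop :=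
  ∀ d ∈ p.support, ∀ j : Fin N, (d (Sum.inl j) ≠ 0 ∨ d (Sum.inr j) ≠ 0) → P j

lemma siteIn_mono {P Q : Fin N → Prop} (h : ∀ j, P j → Q j) {p : MvPolynomial (Idx N) ℝ}
    (hp : SiteIn N P p) : SiteIn N Q p := fun d hd j hj => h j (hp d hd j hj)

lemma siteIn_zero (P : Fin N → Prop) : SiteIn N P 0 := by
  intro d hd; simp at hd

lemma siteIn_add {P : Fin N → Prop} {p q : MvPolynomial (Idx N) ℝ}
    (hp : SiteIn N P p) (hq : SiteIn N P q) : SiteIn N P (p + q) := by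
  classical
  intro d hd j hj
  rcases Finset.mem_union.1 (MvPolynomial.support_add hd) with h | h
  · exact hp d h j hj
  · exact hq d h j hj

lemma siteIn_neg {P : Fin N → Prop} {p : MvPolynomial (Idx N) ℝ}
    (hp : SiteIn N P p) : SiteIn N P (-p) := by
  intro d hd j hj
  exact hp d (by rwa [MvPolynomial.support_neg] at hd) j hj

lemma siteIn_sub {P : Fin N → Prop} {p q : MvPolynomial (Idx N) ℝ}
    (hp : SiteIn N P p) (hq : SiteIn N P q) : SiteIn N P (p - q) := by
  rw [sub_eq_add_neg]; exact siteIn_add hp (siteIn_neg hq)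

lemma siteIn_sum {P : Fin N → Prop} {α : Type*} {t : Finset α}
    {F : α → MvPolynomial (Idx N) ℝ} (h : ∀ i ∈ t, SiteIn N P (F i)) :
    SiteIn N P (∑ i ∈ t, F i) := by
  classical
  induction t using Finset.induction_on with
  | empty => simpa using siteIn_zero P
  | insert _ _ hx ih =>
    rw [Finset.sum_insert hx]
    exact siteIn_add (h _ (Finset.mem_insert_self _ _))
      (ih fun i hi => h i (Finset.mem_insert_of_mem hi))

lemma siteIn_mul {P : Fin N → Prop} {p q : MvPolynomial (Idx N) ℝ}
    (hp : SiteIn N P p) (hq : SiteIn N P q) : SiteIn N P (p * q) := by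
  classical
  intro d hd j hj
  obtain ⟨u, hu, v, hv, rfl⟩ := Finset.mem_add.1 (MvPolynomial.support_mul p q hd)
  rcases hj with hj | hj <;> rw [Finsupp.add_apply] at hj
  · rcases eq_or_ne (u (Sum.inl j)) 0 with h | h
    · exact hq v hv j (Or.inl (by omega))
    · exact hp u hu j (Or.inl h)
  · rcases eq_or_ne (u (Sum.inr j)) 0 with h | h
    · exact hq v hv j (Or.inr (by omega))
    · exact hp u hu j (Or.inr h)

lemma siteIn_pderiv {P : Fin N → Prop} {p : MvPolynomial (Idx N) ℝ} (i : Idx N)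
    (hp : SiteIn N P p) : SiteIn N P (pderiv i p) := by
  classical
  intro d hd j hj
  have : pderiv i p = ∑ e ∈ p.support,
      monomial (e - Finsupp.single i 1) (p.coeff e * (e i : ℝ)) := by
    conv_lhs => rw [p.as_sum]
    rw [map_sum]
    simp [pderiv_monomial]
  rw [this] at hd
  obtain ⟨e, he, hde⟩ := Finset.mem_biUnion.1 (MvPolynomial.support_sum hd)
  have hde' := MvPolynomial.support_monomial_subset hde
  rw [Finset.mem_singleton] at hde'
  subst hde'
  have key : ∀ a : Idx N, (e - Finsupp.single i 1 : Idx N →₀ ℕ) a ≠ 0 → e a ≠ 0 := by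
    intro a ha
    rw [Finsupp.tsub_apply] at ha
    omega
  rcases hj with hj | hj
  · exact hp e he j (Or.inl (key _ hj))
  · exact hp e he j (Or.inr (key _ hj))

lemma pderiv_eq_zero_of_not_site {P : Fin N → Prop} {p : MvPolynomial (Idx N) ℝ}
    (hp : SiteIn N P p) {j : Fin N} (hj : ¬ P j) :
    pderiv (Sum.inl j) p = 0 ∧ pderiv (Sum.inr j) p = 0 := by
  classical
  have h0 : ∀ i : Idx N, (∀ d ∈ p.support, d i = 0) → pderiv i p = 0 := by
    intro i hi
    conv_lhs => rw [p.as_sum]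
    rw [map_sum]
    refine Finset.sum_eq_zero fun d hd => ?_
    rw [pderiv_monomial, hi d hd]
    simp
  constructor <;> refine h0 _ fun d hd => ?_
  · by_contra hne
    exact hj (hp d hd j (Or.inl hne))
  · by_contra hne
    exact hj (hp d hd j (Or.inr hne))

lemma siteIn_tauPow {P : Fin N → Prop} {p : MvPolynomial (Idx N) ℝ} (s : ℤ)
    (hp : SiteIn N P p) :
    SiteIn N (fun j => P (j - (s : Fin N))) (tauPow N s p) := by
  classical
  intro d hd j hj
  rw [tauPow_eq, MvPolynomial.support_rename_of_injective (tmap_inj _)] at hd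
  obtain ⟨e, he, rfl⟩ := Finset.mem_image.1 hd
  have h1 : Finsupp.mapDomain (tmap (s : Fin N)) e (Sum.inl j)
      = e (Sum.inl (j - (s : Fin N))) := by
    have : (Sum.inl j : Idx N) = tmap (s : Fin N) (Sum.inl (j - (s : Fin N))) := by
      simp [tmap]
    rw [this, Finsupp.mapDomain_apply (tmap_inj _)]
  have h2 : Finsupp.mapDomain (tmap (s : Fin N)) e (Sum.inr j)
      = e (Sum.inr (j - (s : Fin N))) := by
    have : (Sum.inr j : Idx N) = tmap (s : Fin N) (Sum.inr (j - (s : Fin N))) := by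
      simp [tmap]
    rw [this, Finsupp.mapDomain_apply (tmap_inj _)]
  rw [h1, h2] at hj
  exact hp e he _ hj

lemma siteIn_poisson {P : Fin N → Prop} {p q : MvPolynomial (Idx N) ℝ}
    (hp : SiteIn N P p) (hq : SiteIn N P q) : SiteIn N P (poisson N p q) := by
  refine siteIn_sum fun j _ => siteIn_sub ?_ ?_ <;>
    exact siteIn_mul (siteIn_pderiv _ hp) (siteIn_pderiv _ hq)

lemma suppIn_iff {m : ℕ} {p : MvPolynomial (Idx N) ℝ} :
    SuppIn N m p ↔ SiteIn N (fun j => (j : ℕ) ≤ m) p := Iff.rfl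

end Sites

section Shift
variable {N : ℕ} [NeZero N]

lemma tauPow_zero (p : MvPolynomial (Idx N) ℝ) : tauPow N 0 p = p := by
  rw [tauPow_eq]
  have : tmap (N := N) ((0 : ℤ) : Fin N) = id := by
    funext x; cases x <;> simp [tmap]
  rw [this, rename_id, AlgHom.id_apply]

lemma tauPow_zero_poly (s : ℤ) : tauPow N s (0 : MvPolynomial (Idx N) ℝ) = 0 := by
  rw [tauPow_eq]; exact map_zero _

lemma exists_shift (m n : ℕ) (s : ℤ) (p q : MvPolynomial (Idx N) ℝ)
    (hp : SuppIn N m p) (hq : SuppIn N n q) :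
    ∃ c : ℤ, SuppIn N (m + n) (tauPow N c (poisson N p (tauPow N s q))) := by
  classical
  by_cases hN : N - 1 ≤ m + n
  · exact ⟨0, fun d _ j _ => by have := j.isLt; omega⟩
  push_neg at hN
  set sv : Fin N := (s : Fin N) with hsv
  have hq' : SiteIn N (fun j => ((j - sv : Fin N) : ℕ) ≤ n) (tauPow N s q) :=
    siteIn_tauPow s (suppIn_iff.1 hq)
  by_cases hint : ∃ j0 : Fin N, (j0 : ℕ) ≤ m ∧ ((j0 - sv : Fin N) : ℕ) ≤ n
  · obtain ⟨j0, hj0m, hj0n⟩ := hint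
    by_cases hsm : (sv : ℕ) ≤ m
    · refine ⟨0, ?_⟩
      rw [tauPow_zero]
      refine suppIn_iff.2 (siteIn_mono ?_ (siteIn_poisson
        (siteIn_mono (fun j hj => Or.inl hj) (suppIn_iff.1 hp))
        (siteIn_mono (fun j hj => Or.inr hj) hq')))
      rintro j (hj | hj)
      · omega
      · have : j = sv + (j - sv) := by ring
        rw [this, Fin.val_add]
        calc ((sv : ℕ) + ((j - sv : Fin N) : ℕ)) % N ≤ (sv : ℕ) + ((j - sv : Fin N) : ℕ) :=
          Nat.mod_le _ _
        _ ≤ m + n := by omega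
    · -- sv > m, realign by -s
      push_neg at hsm
      have hsv0 : sv ≠ 0 := by
        intro h; rw [h] at hsm; simp at hsm
      have hnegval : ((-sv : Fin N) : ℕ) = N - (sv : ℕ) := by
        rw [Fin.neg_def]
        simp only []
        have h1 : (sv : ℕ) ≠ 0 := fun h => hsv0 (Fin.ext (by simpa using h))
        have h2 : (sv : ℕ) < N := sv.isLt
        exact Nat.mod_eq_of_lt (by omega)
      have hkey : N - (sv : ℕ) ≤ n := by
        have h2 : (sv : ℕ) < N := sv.isLt
        have h3 : ((j0 - sv : Fin N) : ℕ) = ((N - (sv : ℕ)) + (j0 : ℕ)) % N := by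
          rw [Fin.sub_def]
        have h4 : ((N - (sv : ℕ)) + (j0 : ℕ)) % N = (N - (sv : ℕ)) + (j0 : ℕ) :=
          Nat.mod_eq_of_lt (by omega)
        omega
      refine ⟨-s, ?_⟩
      have hcast : ((-s : ℤ) : Fin N) = -sv := by push_cast; rfl
      have hP := siteIn_tauPow (N := N) (-s) (siteIn_poisson
        (siteIn_mono (fun j hj => Or.inl hj) (suppIn_iff.1 hp))
        (siteIn_mono (fun j hj => Or.inr hj) hq'))
      refine suppIn_iff.2 (siteIn_mono ?_ hP)
      intro j hj
      rw [hcast] at hj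
      have hjs : j - (-sv) = j + sv := by ring
      rw [hjs] at hj
      rcases hj with hj | hj
      · have : j = (j + sv) + (-sv) := by ring
        rw [this, Fin.val_add]
        calc (((j + sv : Fin N) : ℕ) + ((-sv : Fin N) : ℕ)) % N
            ≤ ((j + sv : Fin N) : ℕ) + ((-sv : Fin N) : ℕ) := Nat.mod_le _ _
        _ ≤ m + n := by rw [hnegval]; omega
      · have : j + sv - sv = j := by ring
        rw [this] at hj
        omega
  · refine ⟨0, ?_⟩
    have hzero : poisson N p (tauPow N s q) = 0 := by
      refine Finset.sum_eq_zero fun j _ => ?_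
      push_neg at hint
      by_cases hjm : (j : ℕ) ≤ m
      · have hz := pderiv_eq_zero_of_not_site hq' (j := j)
          (by have := hint j hjm; omega)
        rw [hz.1, hz.2, mul_zero, mul_zero, sub_zero]
      · have hz := pderiv_eq_zero_of_not_site (suppIn_iff.1 hp) (j := j) hjm
        rw [hz.1, hz.2, zero_mul, zero_mul, sub_zero]
    rw [hzero, tauPow_zero_poly]
    exact fun d hd => by simp at hd

end Shift

section Analytic
variable {N : ℕ} [NeZero N]

lemma pnorm_neg (p : MvPolynomial (Idx N) ℝ) : pnorm 1 (-p) = pnorm 1 p := by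
  rw [pnorm_one_eq, pnorm_one_eq, MvPolynomial.support_neg]
  exact Finset.sum_congr rfl fun d _ => by rw [MvPolynomial.coeff_neg, abs_neg]

lemma pnorm_sub_le (p q : MvPolynomial (Idx N) ℝ) :
    pnorm 1 (p - q) ≤ pnorm 1 p + pnorm 1 q := by
  rw [sub_eq_add_neg]
  exact (pnorm_add_le _ _).trans (by rw [pnorm_neg])

lemma sum_l_bound {r' r'' : ℕ} (p q : MvPolynomial (Idx N) ℝ)
    (hp : p.IsHomogeneous r') (hq : q.IsHomogeneous r'') :
    ∑ l ∈ Finset.range N, pnorm 1 (poisson N p (tauPow N ((l : ℤ) + 1) q))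
      ≤ (r' : ℝ) * pnorm 1 p * ((r'' : ℝ) * pnorm 1 q) := by
  classical
  set Ax := ∑ v : Fin N, pnorm 1 (pderiv (Sum.inl v) p) with hAx
  set Ay := ∑ v : Fin N, pnorm 1 (pderiv (Sum.inr v) p) with hAy
  set Bx := ∑ v : Fin N, pnorm 1 (pderiv (Sum.inl v) q) with hBx
  set By := ∑ v : Fin N, pnorm 1 (pderiv (Sum.inr v) q) with hBy
  have step1 : ∀ s : ℤ, pnorm 1 (poisson N p (tauPow N s q))
      ≤ ∑ j : Fin N, (pnorm 1 (pderiv (Sum.inl j) p)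
          * pnorm 1 (pderiv (Sum.inr (j - (s : Fin N))) q)
        + pnorm 1 (pderiv (Sum.inr j) p)
          * pnorm 1 (pderiv (Sum.inl (j - (s : Fin N))) q)) := by
    intro s
    refine (pnorm_sum_le _ _).trans (Finset.sum_le_sum fun j _ => ?_)
    refine (pnorm_sub_le _ _).trans ?_
    gcongr
    · refine (pnorm_mul_le _ _).trans ?_
      rw [pderiv_tauPow_inr, pnorm_tauPow]
    · refine (pnorm_mul_le _ _).trans ?_
      rw [pderiv_tauPow_inl, pnorm_tauPow]
  have cycle : ∀ j : Fin N, ∀ H : Fin N → ℝ,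
      ∑ l ∈ Finset.range N, H (j - ((((l : ℤ) + 1) : ℤ) : Fin N)) = ∑ v : Fin N, H v := by
    intro j H
    rw [← Fin.sum_univ_eq_sum_range (fun l => H (j - ((((l : ℤ) + 1) : ℤ) : Fin N)))]
    have : ∀ w : Fin N, H (j - ((((w : ℕ) : ℤ) + 1 : ℤ) : Fin N)) = H (j - (w + 1)) := by
      intro w; congr 2; push_cast; simp
    simp only [this]
    exact Fintype.sum_equiv ((Equiv.addRight (1 : Fin N)).trans (Equiv.subLeft j)) _ _
      (fun v => rfl)
  calc ∑ l ∈ Finset.range N, pnorm 1 (poisson N p (tauPow N ((l : ℤ) + 1) q))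
      ≤ ∑ l ∈ Finset.range N, ∑ j : Fin N, (pnorm 1 (pderiv (Sum.inl j) p)
          * pnorm 1 (pderiv (Sum.inr (j - ((((l : ℤ) + 1) : ℤ) : Fin N))) q)
        + pnorm 1 (pderiv (Sum.inr j) p)
          * pnorm 1 (pderiv (Sum.inl (j - ((((l : ℤ) + 1) : ℤ) : Fin N))) q)) :=
        Finset.sum_le_sum fun l _ => step1 _
    _ = ∑ j : Fin N, ∑ l ∈ Finset.range N, (pnorm 1 (pderiv (Sum.inl j) p)
          * pnorm 1 (pderiv (Sum.inr (j - ((((l : ℤ) + 1) : ℤ) : Fin N))) q)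
        + pnorm 1 (pderiv (Sum.inr j) p)
          * pnorm 1 (pderiv (Sum.inl (j - ((((l : ℤ) + 1) : ℤ) : Fin N))) q)) :=
        Finset.sum_comm
    _ = ∑ j : Fin N, (pnorm 1 (pderiv (Sum.inl j) p) * By
        + pnorm 1 (pderiv (Sum.inr j) p) * Bx) := by
        refine Finset.sum_congr rfl fun j _ => ?_
        rw [Finset.sum_add_distrib, ← Finset.mul_sum, ← Finset.mul_sum,
          cycle j (fun v => pnorm 1 (pderiv (Sum.inr v) q)),
          cycle j (fun v => pnorm 1 (pderiv (Sum.inl v) q))]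
    _ = Ax * By + Ay * Bx := by
        rw [Finset.sum_add_distrib, ← Finset.sum_mul, ← Finset.sum_mul]
    _ ≤ (Ax + Ay) * (Bx + By) := by
        have h1 : 0 ≤ Ax := Finset.sum_nonneg fun _ _ => pnorm_nonneg _
        have h2 : 0 ≤ Ay := Finset.sum_nonneg fun _ _ => pnorm_nonneg _
        have h3 : 0 ≤ Bx := Finset.sum_nonneg fun _ _ => pnorm_nonneg _
        have h4 : 0 ≤ By := Finset.sum_nonneg fun _ _ => pnorm_nonneg _
        nlinarith
    _ ≤ (r' : ℝ) * pnorm 1 p * ((r'' : ℝ) * pnorm 1 q) := by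
        have h1 : Ax + Ay ≤ (r' : ℝ) * pnorm 1 p := by
          have := sum_pderiv_le hp
          rwa [Fintype.sum_sum_type] at this
        have h2 : Bx + By ≤ (r'' : ℝ) * pnorm 1 q := by
          have := sum_pderiv_le hq
          rwa [Fintype.sum_sum_type] at this
        have h3 : 0 ≤ Ax + Ay := by
          have : 0 ≤ Ax := Finset.sum_nonneg fun _ _ => pnorm_nonneg _
          have : 0 ≤ Ay := Finset.sum_nonneg fun _ _ => pnorm_nonneg _
          linarith
        have h4 : 0 ≤ Bx + By := by
          have : 0 ≤ Bx := Finset.sum_nonneg fun _ _ => pnorm_nonneg _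
          have : 0 ≤ By := Finset.sum_nonneg fun _ _ => pnorm_nonneg _
          linarith
        nlinarith [pnorm_nonneg p, pnorm_nonneg q]

lemma geom_bound {x : ℝ} (hx : 0 ≤ x) (hx1 : x < 1) (K : ℕ) :
    ∑ i ∈ Finset.range K, x ^ i ≤ 1 / (1 - x) := by
  rw [geom_sum_eq (by intro h; rw [h] at hx1; linarith) K]
  have h1 : (x ^ K - 1) / (x - 1) = (1 - x ^ K) / (1 - x) := by
    rw [← neg_div_neg_eq]; ring_nf
  rw [h1]
  have h2 : (0:ℝ) < 1 - x := by linarith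
  rw [div_le_div_iff₀ h2 h2]
  nlinarith [pow_nonneg hx K]

lemma hc_suppIn {r : ℕ} {p : MvPolynomial (Idx N) ℝ} {m : ℕ} (hp : SuppIn N m p) :
    SuppIn N m (homogeneousComponent r p) := by
  intro d hd
  refine hp d ?_
  rw [MvPolynomial.mem_support_iff] at hd ⊢
  rw [MvPolynomial.coeff_homogeneousComponent] at hd
  intro h0
  rw [h0] at hd
  simp at hd

lemma hc_pnorm_le {r : ℕ} (p : MvPolynomial (Idx N) ℝ) :
    pnorm 1 (homogeneousComponent r p) ≤ pnorm 1 p := by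
  classical
  have hsub : (homogeneousComponent r p).support ⊆ p.support := by
    intro d hd
    rw [MvPolynomial.mem_support_iff] at hd ⊢
    rw [MvPolynomial.coeff_homogeneousComponent] at hd
    intro h0
    rw [h0] at hd
    simp at hd
  rw [pnorm_eq_of_subset hsub, pnorm_one_eq]
  refine Finset.sum_le_sum fun d _ => ?_
  rw [MvPolynomial.coeff_homogeneousComponent]
  split
  · exact le_refl _
  · simp [abs_nonneg]

lemma hc_self {r : ℕ} {p : MvPolynomial (Idx N) ℝ} (hp : p.IsHomogeneous r) :
    homogeneousComponent r p = p := by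
  ext d
  rw [MvPolynomial.coeff_homogeneousComponent]
  split
  · rfl
  · rename_i hne
    by_contra hc
    exact hne (by
      have := hp (by simpa using fun h => hc h.symm)
      rwa [show (Finsupp.weight 1 : (Idx N →₀ ℕ) →+ ℕ) = Finsupp.degree from Finsupp.degree_eq_weight_one.symm] at this)

end Analytic


/-- Let `F = f^⊕`, `G = g^⊕` be cyclically symmetric homogeneous
polynomials of degrees `r', r''` with seeds `f ∈ D(C_f,σ')`, `g ∈ D(C_g,σ'')`, `σ' ≠ σ''`.
Then `{F,G}` admits a seed `h` of class `D(C_h, min(σ',σ''))` with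
`C_h = r' r'' C_f C_g / ((1−e^{−max(σ',σ'')})(1−e^{−|σ'−σ''|}))`. -/
theorem poisson_classD_ne (N : ℕ) [NeZero N]
    (r' r'' : ℕ) (f g : MvPolynomial (Idx N) ℝ)
    (hf : f.IsHomogeneous r') (hg : g.IsHomogeneous r'')
    (Cf Cg σ' σ'' : ℝ) (hCf : 0 < Cf) (hCg : 0 < Cg)
    (hσ' : 0 < σ') (hσ'' : 0 < σ'') (hne : σ' ≠ σ'')
    (hfD : ClassD N Cf σ' f) (hgD : ClassD N Cg σ'' g) :
    ∃ h : MvPolynomial (Idx N) ℝ,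
      oplus N h = poisson N (oplus N f) (oplus N g) ∧
      ClassD N
        (r' * r'' * Cf * Cg /
          ((1 - Real.exp (-max σ' σ'')) * (1 - Real.exp (-|σ' - σ''|))))
        (min σ' σ'') h := by
  classical
  obtain ⟨M1, cf, hfsum, hf0, hfsupp, hfnorm⟩ := hfD
  obtain ⟨M2, cg, hgsum, hg0, hgsupp, hgnorm⟩ := hgD
  set F1 : ℕ → MvPolynomial (Idx N) ℝ := fun m => homogeneousComponent r' (cf m) with hF1
  set G1 : ℕ → MvPolynomial (Idx N) ℝ := fun n => homogeneousComponent r'' (cg n) with hG1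
  have hF1sum : ∑ m ∈ Finset.range M1, F1 m = f := by
    calc ∑ m ∈ Finset.range M1, F1 m
        = homogeneousComponent r' (∑ m ∈ Finset.range M1, cf m) := (map_sum _ _ _).symm
      _ = homogeneousComponent r' f := by rw [← hfsum]
      _ = f := hc_self hf
  have hG1sum : ∑ n ∈ Finset.range M2, G1 n = g := by
    calc ∑ n ∈ Finset.range M2, G1 n
        = homogeneousComponent r'' (∑ n ∈ Finset.range M2, cg n) := (map_sum _ _ _).symm
      _ = homogeneousComponent r'' g := by rw [← hgsum]
      _ = g := hc_self hg
  have hF1supp : ∀ m, SuppIn N m (F1 m) := fun m => hc_suppIn (hfsupp m)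
  have hG1supp : ∀ n, SuppIn N n (G1 n) := fun n => hc_suppIn (hgsupp n)
  have hF1norm : ∀ m, pnorm 1 (F1 m) ≤ Cf * Real.exp (-σ' * m) :=
    fun m => (hc_pnorm_le _).trans (hfnorm m)
  have hG1norm : ∀ n, pnorm 1 (G1 n) ≤ Cg * Real.exp (-σ'' * n) :=
    fun n => (hc_pnorm_le _).trans (hgnorm n)
  have hF1hom : ∀ m, (F1 m).IsHomogeneous r' := fun m => homogeneousComponent_isHomogeneous _ _
  have hG1hom : ∀ n, (G1 n).IsHomogeneous r'' := fun n => homogeneousComponent_isHomogeneous _ _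
  choose c hc using fun (m n l : ℕ) =>
    exists_shift m n ((l : ℤ) + 1) (F1 m) (G1 n) (hF1supp m) (hG1supp n)
  set T : ℕ → ℕ → ℕ → MvPolynomial (Idx N) ℝ := fun m n l =>
    tauPow N (c m n l) (poisson N (F1 m) (tauPow N ((l : ℤ) + 1) (G1 n))) with hT
  set P : ℕ → Finset (ℕ × ℕ) :=
    fun k => (Finset.range M1 ×ˢ Finset.range M2).filter (fun x => x.1 + x.2 = k) with hP
  set comp : ℕ → MvPolynomial (Idx N) ℝ :=
    fun k => ∑ x ∈ P k, ∑ l ∈ Finset.range N, T x.1 x.2 l with hcomp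
  refine ⟨∑ k ∈ Finset.range (M1 + M2), comp k, ?_, M1 + M2, comp, rfl, ?_, ?_, ?_⟩
  · -- oplus h = {F, G}
    have key1 : ∀ k, oplus N (comp k) = ∑ x ∈ P k, ∑ l ∈ Finset.range N,
        oplus N (poisson N (F1 x.1) (tauPow N ((l : ℤ) + 1) (G1 x.2))) := by
      intro k
      rw [hcomp]
      dsimp only
      rw [oplus_sum]
      refine Finset.sum_congr rfl fun x _ => ?_
      rw [oplus_sum]
      refine Finset.sum_congr rfl fun l _ => ?_
      rw [hT]
      dsimp only
      rw [oplus_tauPow]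
    have step1 : poisson N (oplus N f) (oplus N g) = oplus N (poisson N f (oplus N g)) := by
      conv_lhs => rw [oplus_def f]
      rw [poisson_sum_left]
      conv_rhs => rw [oplus_def]
      refine Finset.sum_congr rfl fun l _ => ?_
      conv_lhs => rw [← tauPow_oplus ((l : ℤ) + 1) g]
      rw [poisson_tauPow]
    have step2 : poisson N f (oplus N g)
        = ∑ x ∈ Finset.range M1 ×ˢ Finset.range M2, ∑ l ∈ Finset.range N,
          poisson N (F1 x.1) (tauPow N ((l : ℤ) + 1) (G1 x.2)) := by
      conv_lhs => rw [← hF1sum, ← hG1sum]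
      rw [oplus_sum, poisson_sum_left, Finset.sum_product]
      refine Finset.sum_congr rfl fun m _ => ?_
      rw [poisson_sum_right]
      refine Finset.sum_congr rfl fun n _ => ?_
      rw [oplus_def, poisson_sum_right]
    rw [oplus_sum]
    simp only [key1]
    rw [Finset.sum_fiberwise_of_maps_to (g := fun x : ℕ × ℕ => x.1 + x.2)
      (fun x hx => by
        simp only [Finset.mem_product, Finset.mem_range] at hx ⊢
        omega)]
    rw [step1, step2, oplus_sum]
    refine Finset.sum_congr rfl fun x _ => (oplus_sum _ _).symm
  · -- vanishing
    intro k hk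
    rw [hcomp]
    dsimp only
    have : P k = ∅ := by
      rw [hP]
      refine Finset.filter_false_of_mem fun x hx => ?_
      rw [Finset.mem_product, Finset.mem_range, Finset.mem_range] at hx
      omega
    rw [this, Finset.sum_empty]
  · -- SuppIn
    intro k
    rw [hcomp]
    dsimp only
    refine suppIn_iff.2 (siteIn_sum fun x hx => siteIn_sum fun l _ => ?_)
    have hxk : x.1 + x.2 = k := by
      rw [hP] at hx
      exact (Finset.mem_filter.1 hx).2
    exact suppIn_iff.1 (hxk ▸ hc x.1 x.2 l)
  · -- norm bound
    intro k
    set σm := min σ' σ'' with hσm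
    set Δ := |σ' - σ''| with hΔ
    have hΔpos : 0 < Δ := abs_pos.2 (sub_ne_zero.2 hne)
    have hE2lt : Real.exp (-Δ) < 1 := Real.exp_lt_one_iff.2 (by linarith)
    have hE2pos : (0:ℝ) < Real.exp (-Δ) := Real.exp_pos _
    have hE1lt : Real.exp (-max σ' σ'') < 1 := by
      have h0 : (0:ℝ) < max σ' σ'' := lt_max_iff.2 (Or.inl hσ')
      exact Real.exp_lt_one_iff.2 (by linarith)
    have hE1pos : (0:ℝ) < Real.exp (-max σ' σ'') := Real.exp_pos _
    set w : ℕ × ℕ → ℕ := fun x => if σ' ≤ σ'' then x.2 else x.1 with hw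
    have hterm : ∀ x ∈ P k, Real.exp (-σ' * x.1) * Real.exp (-σ'' * x.2)
        = Real.exp (-σm * k) * Real.exp (-Δ) ^ (w x) := by
      intro x hx
      have hxk : x.1 + x.2 = k := by
        rw [hP] at hx
        exact (Finset.mem_filter.1 hx).2
      have hk' : (k : ℝ) = (x.1 : ℝ) + (x.2 : ℝ) := by
        rw [← hxk]; push_cast; ring
      rw [← Real.exp_add, ← Real.exp_nat_mul, ← Real.exp_add]
      congr 1
      simp only [hw]
      by_cases hcase : σ' ≤ σ''
      · rw [if_pos hcase, hσm, min_eq_left hcase, hΔ,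
          abs_of_nonpos (by linarith), hk']
        ring
      · push_neg at hcase
        rw [if_neg (not_le.2 hcase), hσm, min_eq_right (le_of_lt hcase), hΔ,
          abs_of_nonneg (by linarith), hk']
        ring
    have hwinj : ∀ x ∈ P k, ∀ y ∈ P k, w x = w y → x = y := by
      intro x hx y hy hxy
      rw [hP] at hx hy
      have h1 := (Finset.mem_filter.1 hx).2
      have h2 := (Finset.mem_filter.1 hy).2
      by_cases hcase : σ' ≤ σ''
      · have h3 : x.2 = y.2 := by simpa [hw, hcase] using hxy
        exact Prod.ext (by omega) h3
      · have h3 : x.1 = y.1 := by simpa [hw, hcase] using hxy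
        exact Prod.ext h3 (by omega)
    have hwle : ∀ x ∈ P k, w x ≤ k := by
      intro x hx
      rw [hP] at hx
      have h1 := (Finset.mem_filter.1 hx).2
      simp only [hw]
      split <;> omega
    have hsum_w : ∑ x ∈ P k, Real.exp (-Δ) ^ (w x) ≤ 1 / (1 - Real.exp (-Δ)) := by
      calc ∑ x ∈ P k, Real.exp (-Δ) ^ (w x)
          = ∑ i ∈ (P k).image w, Real.exp (-Δ) ^ i := (Finset.sum_image hwinj).symm
        _ ≤ ∑ i ∈ Finset.range (k + 1), Real.exp (-Δ) ^ i := by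
            refine Finset.sum_le_sum_of_subset_of_nonneg ?_
              (fun i _ _ => le_of_lt (pow_pos hE2pos i))
            intro i hi
            obtain ⟨x, hx, rfl⟩ := Finset.mem_image.1 hi
            rw [Finset.mem_range]
            exact Nat.lt_succ_of_le (hwle x hx)
        _ ≤ 1 / (1 - Real.exp (-Δ)) := geom_bound (le_of_lt hE2pos) hE2lt _
    have main : pnorm 1 (comp k)
        ≤ (r' : ℝ) * r'' * Cf * Cg * Real.exp (-σm * k) * (1 / (1 - Real.exp (-Δ))) := by
      calc pnorm 1 (comp k)
          ≤ ∑ x ∈ P k, pnorm 1 (∑ l ∈ Finset.range N, T x.1 x.2 l) := by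
            rw [hcomp]; exact pnorm_sum_le _ _
        _ ≤ ∑ x ∈ P k, (r' : ℝ) * pnorm 1 (F1 x.1) * ((r'' : ℝ) * pnorm 1 (G1 x.2)) := by
            refine Finset.sum_le_sum fun x _ => ?_
            refine (pnorm_sum_le _ _).trans ?_
            have : ∀ l, pnorm 1 (T x.1 x.2 l)
                = pnorm 1 (poisson N (F1 x.1) (tauPow N ((l : ℤ) + 1) (G1 x.2))) := by
              intro l
              rw [hT]
              dsimp only
              rw [pnorm_tauPow]
            simp only [this]
            exact sum_l_bound _ _ (hF1hom x.1) (hG1hom x.2)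
        _ ≤ ∑ x ∈ P k, (r' : ℝ) * (Cf * Real.exp (-σ' * x.1))
              * ((r'' : ℝ) * (Cg * Real.exp (-σ'' * x.2))) := by
            refine Finset.sum_le_sum fun x _ => ?_
            have h1 := hF1norm x.1
            have h2 := hG1norm x.2
            have h3 := pnorm_nonneg (F1 x.1)
            have h4 := pnorm_nonneg (G1 x.2)
            have h5 : (0:ℝ) ≤ (r' : ℝ) := Nat.cast_nonneg _
            have h6 : (0:ℝ) ≤ (r'' : ℝ) := Nat.cast_nonneg _
            have h7 : (0:ℝ) ≤ Cf * Real.exp (-σ' * x.1) := by positivity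
            have h8 := mul_le_mul h1 h2 h4 h7
            have h9 := mul_le_mul_of_nonneg_left h8 (mul_nonneg h5 h6)
            calc (r' : ℝ) * pnorm 1 (F1 x.1) * ((r'' : ℝ) * pnorm 1 (G1 x.2))
                = ((r' : ℝ) * r'') * (pnorm 1 (F1 x.1) * pnorm 1 (G1 x.2)) := by ring
              _ ≤ ((r' : ℝ) * r'') * (Cf * Real.exp (-σ' * x.1)
                    * (Cg * Real.exp (-σ'' * x.2))) := h9
              _ = (r' : ℝ) * (Cf * Real.exp (-σ' * x.1))
                    * ((r'' : ℝ) * (Cg * Real.exp (-σ'' * x.2))) := by ring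
        _ = ∑ x ∈ P k, ((r' : ℝ) * r'' * Cf * Cg)
              * (Real.exp (-σ' * x.1) * Real.exp (-σ'' * x.2)) :=
            Finset.sum_congr rfl fun x _ => by ring
        _ = ∑ x ∈ P k, ((r' : ℝ) * r'' * Cf * Cg)
              * (Real.exp (-σm * k) * Real.exp (-Δ) ^ (w x)) :=
            Finset.sum_congr rfl fun x hx => by rw [hterm x hx]
        _ = ((r' : ℝ) * r'' * Cf * Cg * Real.exp (-σm * k))
              * ∑ x ∈ P k, Real.exp (-Δ) ^ (w x) := by
            rw [Finset.mul_sum]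
            exact Finset.sum_congr rfl fun x _ => by ring
        _ ≤ ((r' : ℝ) * r'' * Cf * Cg * Real.exp (-σm * k)) * (1 / (1 - Real.exp (-Δ))) := by
            have hA : (0:ℝ) ≤ (r' : ℝ) * r'' * Cf * Cg * Real.exp (-σm * k) := by positivity
            exact mul_le_mul_of_nonneg_left hsum_w hA
    refine main.trans ?_
    have hD2 : (0:ℝ) < 1 - Real.exp (-Δ) := by linarith
    have hD1 : (0:ℝ) < 1 - Real.exp (-max σ' σ'') := by linarith
    have hnum : (0:ℝ) ≤ (r' : ℝ) * r'' * Cf * Cg * Real.exp (-σm * k) := by positivity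
    calc (r' : ℝ) * r'' * Cf * Cg * Real.exp (-σm * k) * (1 / (1 - Real.exp (-Δ)))
        = ((r' : ℝ) * r'' * Cf * Cg * Real.exp (-σm * k)) / (1 - Real.exp (-Δ)) := by
          ring
      _ ≤ ((r' : ℝ) * r'' * Cf * Cg * Real.exp (-σm * k))
            / ((1 - Real.exp (-max σ' σ'')) * (1 - Real.exp (-Δ))) := by
          rw [div_le_div_iff₀ hD2 (mul_pos hD1 hD2)]
          nlinarith [mul_nonneg (mul_nonneg hnum hD2.le) hE1pos.le]
      _ = (r' : ℝ) * r'' * Cf * Cg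
            / ((1 - Real.exp (-max σ' σ'')) * (1 - Real.exp (-Δ))) * Real.exp (-σm * k) := by
          ring
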